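/- Let Z = (∑ Y)_∞ be the ℓ_∞-sum of copies of a Banach space Y, with shifts L, R and zeroth-coordinate projection P₀. For any T ∈ L(Z), the series S₀ = ∑_{n=0}^∞ Rⁿ P₀ T Lⁿ converges coordinatewise (in the product topology) to a bounded operator on Z with ‖S₀‖ ≤ ‖T‖, and the resulting operator S₀ satisfies L S₀ = S₀ L and (I − RL) S₀ = P₀ T. -/
import Mathlib


open ENNReal Filter Topology

set_option maxHeartbeats 1000000

/-- For `Z = (∑ Y)_∞` and `T ∈ L(Z)`, the series `S₀ = ∑ₙ Rⁿ P₀ T Lⁿ` converges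
coordinatewise to a bounded operator `S₀` with `‖S₀‖ ≤ ‖T‖`, which satisfies
`L S₀ = S₀ L` and `(I − RL) S₀ = P₀ T`. -/
theorem linfty_sum_S0 {Y : Type*} [NormedAddCommGroup Y] [NormedSpace ℂ Y]
    [CompleteSpace Y]
    (L R P0 : lp (fun _ : ℕ => Y) ∞ →L[ℂ] lp (fun _ : ℕ => Y) ∞)
    (hL : ∀ (f : lp (fun _ : ℕ => Y) ∞) (n : ℕ), L f n = f (n + 1))
    (hR0 : ∀ f : lp (fun _ : ℕ => Y) ∞, R f 0 = 0)
    (hR : ∀ (f : lp (fun _ : ℕ => Y) ∞) (n : ℕ), R f (n + 1) = f n)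
    (hP0 : ∀ f : lp (fun _ : ℕ => Y) ∞, P0 f 0 = f 0)
    (hP : ∀ (f : lp (fun _ : ℕ => Y) ∞) (n : ℕ), P0 f (n + 1) = 0)
    (T : lp (fun _ : ℕ => Y) ∞ →L[ℂ] lp (fun _ : ℕ => Y) ∞) :
    ∃ S0 : lp (fun _ : ℕ => Y) ∞ →L[ℂ] lp (fun _ : ℕ => Y) ∞,
      ‖S0‖ ≤ ‖T‖ ∧
      (∀ (x : lp (fun _ : ℕ => Y) ∞) (k : ℕ),
        Tendsto (fun N => (∑ n ∈ Finset.range N, (R ^ n * (P0 * T) * L ^ n) x : lp (fun _ : ℕ => Y) ∞) k)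
          atTop (𝓝 (S0 x k))) ∧
      L * S0 = S0 * L ∧ (1 - R * L) * S0 = P0 * T := by
  set Z := lp (fun _ : ℕ => Y) ∞ with hZ
  -- coordinates of L ^ k
  have hLpow : ∀ (k : ℕ) (x : Z) (n : ℕ), (L ^ k) x n = x (n + k) := by
    intro k
    induction k with
    | zero => intro x n; simp
    | succ k ih =>
      intro x n
      have h1 : (L ^ (k + 1)) x = (L ^ k) (L x) := by
        rw [pow_succ]; rfl
      rw [h1, ih, hL, Nat.add_assoc]
  -- coordinates of R ^ n (P0 y)
  have hRP : ∀ (n : ℕ) (y : Z) (k : ℕ),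
      (R ^ n) (P0 y) k = if k = n then y 0 else 0 := by
    intro n
    induction n with
    | zero =>
      intro y k
      cases k with
      | zero => simpa using hP0 y
      | succ m => simpa using hP y m
    | succ n ih =>
      intro y k
      have h1 : (R ^ (n + 1)) (P0 y) = R ((R ^ n) (P0 y)) := by
        rw [pow_succ']; rfl
      rw [h1]
      cases k with
      | zero => simpa using hR0 _
      | succ m =>
        rw [hR, ih]
        simp [Nat.succ_inj]
  -- coordinates of the term
  have hterm : ∀ (n : ℕ) (x : Z) (k : ℕ),
      ((R ^ n * (P0 * T) * L ^ n) x) k = if k = n then (T ((L ^ n) x)) 0 else 0 := by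
    intro n x k
    have : (R ^ n * (P0 * T) * L ^ n) x = (R ^ n) (P0 (T ((L ^ n) x))) := rfl
    rw [this, hRP]
  -- coordinates of finite sums
  have sumcoord : ∀ (N : ℕ) (g : ℕ → Z) (k : ℕ),
      (∑ n ∈ Finset.range N, g n : Z) k = ∑ n ∈ Finset.range N, (g n) k := by
    intro N g k
    induction N with
    | zero => simp [lp.coeFn_zero]
    | succ N ih =>
      rw [Finset.sum_range_succ, Finset.sum_range_succ, lp.coeFn_add, Pi.add_apply, ih]
  -- membership
  have hmem : ∀ x : Z, Memℓp (fun k => (T ((L ^ k) x)) 0) ∞ := by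
    intro x
    apply memℓp_infty
    refine ⟨‖T‖ * ‖x‖, ?_⟩
    rintro - ⟨k, rfl⟩
    calc ‖(T ((L ^ k) x)) 0‖ ≤ ‖T ((L ^ k) x)‖ :=
          lp.norm_apply_le_norm ENNReal.top_ne_zero _ 0
      _ ≤ ‖T‖ * ‖(L ^ k) x‖ := T.le_opNorm _
      _ ≤ ‖T‖ * ‖x‖ := by
          gcongr
          refine lp.norm_le_of_forall_le (norm_nonneg x) fun n => ?_
          rw [hLpow]
          exact lp.norm_apply_le_norm ENNReal.top_ne_zero x _
  have coord_bound : ∀ (x : Z) (k : ℕ), ‖(T ((L ^ k) x)) 0‖ ≤ ‖T‖ * ‖x‖ := by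
    intro x k
    calc ‖(T ((L ^ k) x)) 0‖ ≤ ‖T ((L ^ k) x)‖ :=
          lp.norm_apply_le_norm ENNReal.top_ne_zero _ 0
      _ ≤ ‖T‖ * ‖(L ^ k) x‖ := T.le_opNorm _
      _ ≤ ‖T‖ * ‖x‖ := by
          gcongr
          refine lp.norm_le_of_forall_le (norm_nonneg x) fun n => ?_
          rw [hLpow]
          exact lp.norm_apply_le_norm ENNReal.top_ne_zero x _
  -- the linear map
  let S0lin : Z →ₗ[ℂ] Z :=
    { toFun := fun x => ⟨fun k => (T ((L ^ k) x)) 0, hmem x⟩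
      map_add' := by
        intro x y
        apply lp.ext
        funext k
        show (T ((L ^ k) (x + y))) 0 = _
        rw [map_add, map_add, lp.coeFn_add, Pi.add_apply, lp.coeFn_add]
        rfl
      map_smul' := by
        intro c x
        apply lp.ext
        funext k
        show (T ((L ^ k) (c • x))) 0 = _
        rw [map_smul, map_smul, lp.coeFn_smul, Pi.smul_apply, lp.coeFn_smul]
        rfl }
  have hbound : ∀ x : Z, ‖S0lin x‖ ≤ ‖T‖ * ‖x‖ := by
    intro x
    refine lp.norm_le_of_forall_le (mul_nonneg (norm_nonneg T) (norm_nonneg x)) fun k => ?_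
    exact coord_bound x k
  refine ⟨S0lin.mkContinuous ‖T‖ hbound,
    S0lin.mkContinuous_norm_le (norm_nonneg T) hbound, ?_, ?_, ?_⟩
  · -- convergence
    intro x k
    have hS0 : ∀ m, (S0lin.mkContinuous ‖T‖ hbound) x m = (T ((L ^ m) x)) 0 := fun m => rfl
    refine Tendsto.congr' ?_ tendsto_const_nhds
    filter_upwards [eventually_ge_atTop (k + 1)] with N hN
    rw [sumcoord]
    have h2 : ∀ n ∈ Finset.range N, ((R ^ n * (P0 * T) * L ^ n) x) k
        = if k = n then (T ((L ^ n) x)) 0 else 0 := fun n _ => hterm n x k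
    have hk : k ∈ Finset.range N := Finset.mem_range.mpr (by omega)
    rw [Finset.sum_congr rfl h2, Finset.sum_ite_eq, if_pos hk, hS0]
  · -- L * S0 = S0 * L
    refine ContinuousLinearMap.ext fun x => ?_
    apply lp.ext
    funext k
    show L ((S0lin.mkContinuous ‖T‖ hbound) x) k = (S0lin.mkContinuous ‖T‖ hbound) (L x) k
    rw [hL]
    show (T ((L ^ (k + 1)) x)) 0 = (T ((L ^ k) (L x))) 0
    congr 1
  · -- (1 - R*L) * S0 = P0 * T
    refine ContinuousLinearMap.ext fun x => ?_
    apply lp.ext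
    funext k
    simp only [ContinuousLinearMap.mul_apply, ContinuousLinearMap.sub_apply,
      ContinuousLinearMap.one_apply, lp.coeFn_sub, Pi.sub_apply]
    cases k with
    | zero =>
      rw [hR0, hP0, sub_zero]
      show (T ((L ^ 0) x)) 0 = (T x) 0
      rw [pow_zero]
      rfl
    | succ m =>
      rw [hR, hL, hP, sub_self]
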